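/- arXiv:1712.06033 — 2 statements merged into one kernel-verified Lean document; each statement's English description precedes it below -/
import Mathlib

section
/- Let h : Q → P be a contraction morphism of positive opetopes, k ≥ 0, q ∈ Q_{k+2} a 2-collapsing face (i.e. h(q) ∈ P_k), and q' ∈ δ(q) with h(q') ∈ P_k. Then h(q') = h(γ(q)). -/
open scoped Classical

structure PHg where
  Face : ℕ → Type
  fin : ∀ k, Finite (Face k)
  γ : ∀ k, Face (k+1) → Face k
  δ : ∀ k, Face (k+1) → Face k → Prop
  δ_total : ∀ k a, ∃ x, δ k a x
  δ0_fun : ∀ (a : Face 1) (x y : Face 0), δ 0 a x → δ 0 a y → x = y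
  bounded : ∃ n, ∀ k, n < k → IsEmpty (Face k)

abbrev PHg.FaceS (S : PHg) : Type := Σ k, S.Face k

/-- The codomain operation, viewed on faces of arbitrary dimension
(identity in dimension 0). -/
def gammaS (S : PHg) : S.FaceS → S.FaceS
  | ⟨0, x⟩ => ⟨0, x⟩
  | ⟨k+1, x⟩ => ⟨k, S.γ k x⟩

/-- `x ∈ δ(q)`. -/
def inDelta (S : PHg) (x q : S.FaceS) : Prop :=
  match q with
  | ⟨0, _⟩ => False
  | ⟨k+1, a⟩ => ∃ h : x.1 = k, S.δ k a (h ▸ x.2)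

/-- `x = γ(q)` (for `q` of positive dimension). -/
def inGammaS (S : PHg) (x q : S.FaceS) : Prop := 0 < q.1 ∧ gammaS S q = x

/-- `x ∈ ∂(q) = {γ(q)} ∪ δ(q)`. -/
def inBoundary (S : PHg) (x q : S.FaceS) : Prop := inGammaS S x q ∨ inDelta S x q

def covPlus (S : PHg) (a b : S.FaceS) : Prop :=
  ∃ α, inDelta S a α ∧ gammaS S α = b

/-- The upper order `<⁺`. -/
def ltPlus (S : PHg) : S.FaceS → S.FaceS → Prop := Relation.TransGen (covPlus S)

def lePlus (S : PHg) (a b : S.FaceS) : Prop := a = b ∨ ltPlus S a b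

def perpPlus (S : PHg) (a b : S.FaceS) : Prop := ltPlus S a b ∨ ltPlus S b a

def covMinus (S : PHg) (a b : S.FaceS) : Prop := 0 < a.1 ∧ inDelta S (gammaS S a) b

/-- The lower order `<⁻`. -/
def ltMinus (S : PHg) : S.FaceS → S.FaceS → Prop := Relation.TransGen (covMinus S)

def perpMinus (S : PHg) (a b : S.FaceS) : Prop := ltMinus S a b ∨ ltMinus S b a

/-- Iterated codomain `γ^{(k)}`. -/
def gammaIter (S : PHg) (k : ℕ) (p : S.FaceS) : S.FaceS := (gammaS S)^[p.1 - k] p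

/-- `X` is a `<⁺`-interval. -/
def IntervalPlus (S : PHg) (X : Set S.FaceS) : Prop :=
  X = ∅ ∨ ∃ x0 x1, lePlus S x0 x1 ∧ X = {x | lePlus S x0 x ∧ lePlus S x x1}

def hasDim (S : PHg) (n : ℕ) : Prop :=
  Nonempty (S.Face n) ∧ ∀ k, n < k → IsEmpty (S.Face k)

/-- A positive opetope: a nonempty positive hypergraph satisfying globularity,
strictness, disjointness, pencil linearity, and having at most one face outside
`δ(S_{k+1})` in each dimension. -/
structure IsOpetope (S : PHg) : Prop where
  ne : Nonempty (S.Face 0)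
  glob_gamma : ∀ a : S.FaceS, 2 ≤ a.1 →
    ({gammaS S (gammaS S a)} : Set S.FaceS) =
      {x | ∃ y, inDelta S y a ∧ gammaS S y = x} \ {x | ∃ y, inDelta S y a ∧ inDelta S x y}
  glob_delta : ∀ a : S.FaceS, 2 ≤ a.1 →
    {x | inDelta S x (gammaS S a)} =
      {x | ∃ y, inDelta S y a ∧ inDelta S x y} \ {x | ∃ y, inDelta S y a ∧ gammaS S y = x}
  strict : ∀ a, ¬ ltPlus S a a
  linear0 : ∀ a b : S.FaceS, a.1 = 0 → b.1 = 0 → a = b ∨ perpPlus S a b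
  disj : ∀ a b : S.FaceS, 0 < a.1 → ¬ (perpMinus S a b ∧ perpPlus S a b)
  pencil_gamma : ∀ x a b, inGammaS S x a → inGammaS S x b → a = b ∨ perpPlus S a b
  pencil_delta : ∀ x a b, inDelta S x a → inDelta S x b → a = b ∨ perpPlus S a b
  size_le_one : ∀ k (a b : S.Face k),
    (¬ ∃ α : S.Face (k+1), S.δ k α a) → (¬ ∃ α : S.Face (k+1), S.δ k α b) → a = b
/-- A contraction morphism (`ι`-map) of positive opetopes. -/
structure IotaMap (Q P : PHg) where
  f : Q.FaceS → P.FaceS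
  dim_le : ∀ q, (f q).1 ≤ q.1
  gamma_pres : ∀ (k : ℕ) (q : Q.FaceS), f (gammaIter Q k q) = gammaIter P k (f q)
  dom_eq : ∀ q : Q.FaceS, 0 < q.1 → (f q).1 = q.1 →
      (∀ x, inDelta Q x q → (f x).1 = x.1 → inDelta P (f x) (f q)) ∧
      (∀ x y, inDelta Q x q → (f x).1 = x.1 → inDelta Q y q → (f y).1 = y.1 →
        f x = f y → x = y) ∧
      (∀ z, inDelta P z (f q) → ∃ x, inDelta Q x q ∧ (f x).1 = x.1 ∧ f x = z)
  dom_one : ∀ q : Q.FaceS, (f q).1 + 1 = q.1 →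
      (∀ x, inDelta Q x q → (f x).1 = x.1 → f x = f q) ∧
      (∃! x, inDelta Q x q ∧ (f x).1 = x.1)
  dom_more : ∀ q : Q.FaceS, (f q).1 + 2 ≤ q.1 → ∀ x, inDelta Q x q → (f x).1 < x.1

lemma PHg.finiteFaceS (S : PHg) : Finite S.FaceS := by
  obtain ⟨n, hn⟩ := S.bounded
  haveI : ∀ k, Finite (S.Face k) := S.fin
  have hlt : ∀ x : S.FaceS, x.1 < n + 1 := by
    intro x
    by_contra hx
    exact (hn x.1 (by omega)).false x.2
  have hg : Function.Injective
      (fun x : S.FaceS => (⟨⟨x.1, hlt x⟩, x.2⟩ : Σ i : Fin (n+1), S.Face i)) := by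
    rintro ⟨a, x⟩ ⟨b, y⟩ hxy
    obtain ⟨h1, h2⟩ := Sigma.ext_iff.mp hxy
    have hab : a = b := congrArg Fin.val h1
    subst hab
    simp only at h2
    rw [eq_of_heq h2]
  exact Finite.of_injective _ hg

lemma ltPlus_wf (S : PHg) (hS : IsOpetope S) :
    WellFounded (fun a b : S.FaceS => ltPlus S b a) := by
  haveI := S.finiteFaceS
  haveI : IsTrans S.FaceS (fun a b => ltPlus S b a) :=
    ⟨fun _ _ _ h1 h2 => Relation.TransGen.trans h2 h1⟩
  haveI : IsIrrefl S.FaceS (fun a b => ltPlus S b a) := ⟨fun a => hS.strict a⟩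
  exact Finite.wellFounded_of_trans_of_irrefl _

lemma inDelta_fst (S : PHg) {x p : S.FaceS} (hx : inDelta S x p) : x.1 + 1 = p.1 := by
  obtain ⟨n, a⟩ := p
  cases n with
  | zero => exact hx.elim
  | succ m => obtain ⟨hd, _⟩ := hx; simp [hd]

lemma gammaS_fst (S : PHg) (p : S.FaceS) : (gammaS S p).1 = p.1 - 1 := by
  obtain ⟨n, a⟩ := p
  cases n <;> rfl

/-- If `q ∈ Q_{k+2}` is 2-collapsing and `q' ∈ δ(q)` is 1-collapsing
(i.e. `h(q') ∈ P_k`), then `h(q') = h(γ(q))`. -/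
theorem two_collapsing_delta
    (Q P : PHg) (hQ : IsOpetope Q) (hP : IsOpetope P) (h : IotaMap Q P)
    (k : ℕ) (q q' : Q.FaceS)
    (hq : q.1 = k + 2) (hcol : (h.f q).1 = k)
    (hq' : inDelta Q q' q) (hcol' : (h.f q').1 = k) :
    h.f q' = h.f (gammaS Q q) := by
  have hq'1 : q'.1 = k + 1 := by have := inDelta_fst Q hq'; omega
  -- collapsing a 1-step codomain doesn't change the image
  have hA : ∀ y : Q.FaceS, y.1 = k + 1 → (h.f y).1 = k →
      h.f (gammaS Q y) = h.f y := by
    intro y h1 h2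
    have hgp := h.gamma_pres k y
    have e1 : gammaIter Q k y = gammaS Q y := by
      unfold gammaIter
      rw [h1]
      have : k + 1 - k = 1 := by omega
      rw [this, Function.iterate_one]
    have e2 : gammaIter P k (h.f y) = h.f y := by
      unfold gammaIter
      rw [h2, Nat.sub_self, Function.iterate_zero_apply]
    rw [e1, e2] at hgp
    exact hgp
  have hB : h.f (gammaS Q q) = h.f q := by
    have hgp := h.gamma_pres (k+1) q
    have e1 : gammaIter Q (k+1) q = gammaS Q q := by
      unfold gammaIter
      rw [hq]
      have : k + 2 - (k + 1) = 1 := by omega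
      rw [this, Function.iterate_one]
    have e2 : gammaIter P (k+1) (h.f q) = h.f q := by
      unfold gammaIter
      rw [hcol]
      have : k - (k + 1) = 0 := by omega
      rw [this, Function.iterate_zero_apply]
    rw [e1, e2] at hgp
    exact hgp
  have hC : h.f (gammaS Q (gammaS Q q)) = h.f q := by
    have hgp := h.gamma_pres k q
    have e1 : gammaIter Q k q = gammaS Q (gammaS Q q) := by
      unfold gammaIter
      rw [hq]
      have : k + 2 - k = 2 := by omega
      rw [this]
      rfl
    have e2 : gammaIter P k (h.f q) = h.f q := by
      unfold gammaIter
      rw [hcol, Nat.sub_self, Function.iterate_zero_apply]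
    rw [e1, e2] at hgp
    exact hgp
  have hmore := h.dom_more q (by omega)
  have main : ∀ x : Q.FaceS, ∀ y : Q.FaceS, inDelta Q y q → (h.f y).1 = k →
      gammaS Q y = x → h.f y = h.f q := by
    intro x
    refine (ltPlus_wf Q hQ).induction (C := fun x => ∀ y : Q.FaceS, inDelta Q y q → (h.f y).1 = k → gammaS Q y = x → h.f y = h.f q) x ?_
    intro x IH y hyq hyk hxy
    have hy1 : y.1 = k + 1 := by have := inDelta_fst Q hyq; omega
    have hx1 : x.1 = k := by rw [← hxy, gammaS_fst]; omega
    have hfx : h.f x = h.f y := by rw [← hxy]; exact hA y hy1 hyk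
    by_cases hxB : ∃ z, inDelta Q z q ∧ inDelta Q x z
    · obtain ⟨z, hzq, hxz⟩ := hxB
      have hz1 : z.1 = k + 1 := by have := inDelta_fst Q hzq; omega
      have hzlt : (h.f z).1 < z.1 := hmore z hzq
      have hzk : (h.f z).1 = k := by
        by_contra hne
        have h2 : (h.f z).1 + 2 ≤ z.1 := by omega
        have hcon := h.dom_more z h2 x hxz
        rw [hfx] at hcon
        omega
      have hdone := (h.dom_one z (by omega)).1 x hxz (by rw [hfx, hyk, hx1])
      have hzq' : h.f z = h.f q := by
        refine IH (gammaS Q z) ?_ z hzq hzk rfl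
        exact Relation.TransGen.single ⟨z, hxz, rfl⟩
      rw [← hfx, hdone, hzq']
    · have hset := hQ.glob_gamma q (by omega)
      rw [Set.ext_iff] at hset
      have hmem : x ∈ ({gammaS Q (gammaS Q q)} : Set Q.FaceS) :=
        (hset x).mpr ⟨⟨y, hyq, hxy⟩, hxB⟩
      have hx : x = gammaS Q (gammaS Q q) := hmem
      rw [← hfx, hx, hC]
  have hmq : h.f q' = h.f q := main (gammaS Q q') q' hq' hcol' rfl
  rw [hmq, hB]
end

section
/- Let P be a positive opetope, and let x_m ∈ P_m, x_k ∈ P_k with n ≥ m > k ≥ l ≥ 0. The truncation map tr : Flags_P[x_m, x_l] → Flags_P[x_k, x_l] (restricting a flag through x_k to its part below x_k) preserves the flag order and sends the initial (resp. terminal) flag to the initial (resp. terminal) flag. -/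
open scoped Classical

/-- A restricted flag from dimension `m` down to dimension `l`,
encoded as a function `ℕ → S.FaceS` (entries outside `[l,m]` are irrelevant). -/
def IsRFlag (S : PHg) (m l : ℕ) (F : ℕ → S.FaceS) : Prop :=
  (∀ i, l ≤ i → i ≤ m → (F i).1 = i) ∧
  (∀ i, l ≤ i → i < m → inBoundary S (F i) (F (i+1)))

/-- The pencil order `≺ₓ` on the pencil over `x`. -/
def pencilLt (S : PHg) (x a b : S.FaceS) : Prop :=
  (inGammaS S x b ∧ inDelta S x a) ∨
  (inDelta S x a ∧ inDelta S x b ∧ ltPlus S a b) ∨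
  (inGammaS S x a ∧ inGammaS S x b ∧ ltPlus S b a)

/-- The sign of the flag segment `[F j, …, F l]`. -/
noncomputable def sgnSeg (S : PHg) (l : ℕ) (F : ℕ → S.FaceS) : ℕ → ℤ
  | 0 => 1
  | j+1 => if l ≤ j ∧ inDelta S (F j) (F (j+1)) then -(sgnSeg S l F j) else sgnSeg S l F j

/-- The flag order `◁` on flags from dimension `m` down to `l`. -/
def flagLt (S : PHg) (l m : ℕ) (F G : ℕ → S.FaceS) : Prop :=
  ∃ k, l ≤ k ∧ k ≤ m ∧ (∀ i, l ≤ i → i < k → F i = G i) ∧ F k ≠ G k ∧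
    ((k = 0 ∧ ltPlus S (G 0) (F 0)) ∨
     (0 < k ∧ sgnSeg S l F (k-1) = 1 ∧ pencilLt S (F (k-1)) (F k) (G k)) ∨
     (0 < k ∧ sgnSeg S l F (k-1) = -1 ∧ pencilLt S (F (k-1)) (G k) (F k)))

/-- `i` is the low level `ll` of the flag `F` (with top dimension `n`). -/
def LowLevelT (S : PHg) (n : ℕ) (F : ℕ → S.FaceS) (i : ℕ) : Prop :=
  i + 2 ≤ n ∧ inDelta S (F (i+1)) (F (i+2)) ∧
    ∀ j, i < j → j + 2 ≤ n → ¬ inDelta S (F (j+1)) (F (j+2))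

/-- Membership in `Flags[t / b]`, flags from top face `t` (dim `m`) to bottom face `b` (dim `l`). -/
def MemFlags (S : PHg) (l m : ℕ) (t b : S.FaceS) (F : ℕ → S.FaceS) : Prop :=
  IsRFlag S m l F ∧ F m = t ∧ F l = b

def EqOnFl {α : Type*} (l m : ℕ) (F G : ℕ → α) : Prop :=
  ∀ i, l ≤ i → i ≤ m → F i = G i

/-- `G` is the successor of `F` in `Flags[t / b]` with respect to the flag order. -/
def SuccFl (S : PHg) (l m : ℕ) (t b : S.FaceS) (F G : ℕ → S.FaceS) : Prop :=
  MemFlags S l m t b F ∧ MemFlags S l m t b G ∧ flagLt S l m F G ∧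
  ∀ H, MemFlags S l m t b H → flagLt S l m F H → (EqOnFl l m G H ∨ flagLt S l m G H)


lemma sgnSeg_congr (S : PHg) (l : ℕ) (F G : ℕ → S.FaceS) :
    ∀ j, (∀ i, i ≤ j → F i = G i) → sgnSeg S l F j = sgnSeg S l G j
  | 0, _ => rfl
  | j+1, h => by
    have ih := sgnSeg_congr S l F G j (fun i hi => h i (Nat.le_succ_of_le hi))
    rw [sgnSeg, sgnSeg, h j (Nat.le_succ j), h (j+1) le_rfl, ih]

/-- Truncation of flags preserves the flag order (non-strictly) and
sends the initial (resp. terminal) flag to the initial (resp. terminal) flag. -/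
theorem truncation_preserves_order_and_endpoints
    (S : PHg) (hS : IsOpetope S) (l k m : ℕ) (hlk : l ≤ k) (hkm : k < m)
    (xm xl : S.FaceS) (hm : xm.1 = m) (hl : xl.1 = l) :
    (∀ F G, MemFlags S l m xm xl F → MemFlags S l m xm xl G →
      flagLt S l m F G → EqOnFl l k F G ∨ flagLt S l k F G) ∧
    (∀ F, MemFlags S l m xm xl F →
      (∀ G, MemFlags S l m xm xl G → EqOnFl l m G F ∨ flagLt S l m F G) →
      (∀ G, MemFlags S l k (F k) xl G → EqOnFl l k G F ∨ flagLt S l k F G)) ∧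
    (∀ F, MemFlags S l m xm xl F →
      (∀ G, MemFlags S l m xm xl G → EqOnFl l m G F ∨ flagLt S l m G F) →
      (∀ G, MemFlags S l k (F k) xl G → EqOnFl l k G F ∨ flagLt S l k G F)) := by
  have key : ∀ (F G : ℕ → S.FaceS), MemFlags S l k (F k) xl G →
      MemFlags S l m xm xl F →
      MemFlags S l m xm xl (fun i => if i ≤ k then G i else F i) := by
    intro F G hG hF
    obtain ⟨⟨hFdim, hFbd⟩, hFm, hFl⟩ := hF
    obtain ⟨⟨hGdim, hGbd⟩, hGk, hGl⟩ := hG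
    refine ⟨⟨?_, ?_⟩, ?_, ?_⟩
    · intro i hli him
      by_cases h : i ≤ k
      · simpa [h] using hGdim i hli h
      · simpa [h] using hFdim i hli him
    · intro i hli him
      by_cases h1 : i + 1 ≤ k
      · have h0 : i ≤ k := le_trans (Nat.le_succ i) h1
        simpa [h1, h0] using hGbd i hli (by omega)
      · by_cases h0 : i ≤ k
        · have hik : i = k := by omega
          subst hik
          simpa [h0, h1, hGk] using hFbd i hli him
        · simpa [h0, h1] using hFbd i hli him
    · simpa [show ¬ m ≤ k by omega] using hFm
    · simpa [hlk] using hGl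
  refine ⟨?_, ?_, ?_⟩
  · rintro F G hF hG ⟨k', hlk', hk'm, hagree, hne, hcase⟩
    by_cases hk' : k' ≤ k
    · exact Or.inr ⟨k', hlk', hk', hagree, hne, hcase⟩
    · exact Or.inl fun i hli hik => hagree i hli (by omega)
  · rintro F hF hinit G hG
    set H : ℕ → S.FaceS := fun i => if i ≤ k then G i else F i with hHdef
    have hHmem : MemFlags S l m xm xl H := key F G hG hF
    rcases hinit H hHmem with heq | hlt
    · left
      intro i hli hik
      simpa [H, hik] using heq i hli (by omega)
    · obtain ⟨k', hlk', hk'm, hagree, hne, hcase⟩ := hlt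
      by_cases hk' : k' ≤ k
      · right
        have hHk' : H k' = G k' := by simp [H, hk']
        refine ⟨k', hlk', hk', ?_, ?_, ?_⟩
        · intro i hli hik'
          simpa [H, show i ≤ k by omega] using hagree i hli hik'
        · rw [← hHk']; exact hne
        · rcases hcase with ⟨h0, hp⟩ | ⟨h0, hs, hp⟩ | ⟨h0, hs, hp⟩
          · refine Or.inl ⟨h0, ?_⟩
            subst h0
            simpa [H] using hp
          · exact Or.inr (Or.inl ⟨h0, hs, by rwa [hHk'] at hp⟩)
          · exact Or.inr (Or.inr ⟨h0, hs, by rwa [hHk'] at hp⟩)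
      · left
        intro i hli hik
        have := hagree i hli (by omega)
        simp only [H, if_pos hik] at this
        exact this.symm
  · rintro F hF hterm G hG
    set H : ℕ → S.FaceS := fun i => if i ≤ k then G i else F i with hHdef
    have hHmem : MemFlags S l m xm xl H := key F G hG hF
    have hHG : ∀ i, i ≤ k → H i = G i := fun i hi => by simp [H, hi]
    rcases hterm H hHmem with heq | hlt
    · left
      intro i hli hik
      simpa [H, hik] using heq i hli (by omega)
    · obtain ⟨k', hlk', hk'm, hagree, hne, hcase⟩ := hlt
      by_cases hk' : k' ≤ k
      · right
        have hsgn : k' = 0 ∨ sgnSeg S l G (k'-1) = sgnSeg S l H (k'-1) := by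
          rcases Nat.eq_zero_or_pos k' with h | h
          · exact Or.inl h
          · exact Or.inr (sgnSeg_congr S l G H (k'-1)
              (fun i hi => (hHG i (by omega)).symm))
        refine ⟨k', hlk', hk', ?_, ?_, ?_⟩
        · intro i hli hik'
          have := hagree i hli hik'
          rw [hHG i (by omega)] at this
          exact this
        · rw [← hHG k' hk']; exact hne
        · rcases hcase with ⟨h0, hp⟩ | ⟨h0, hs, hp⟩ | ⟨h0, hs, hp⟩
          · refine Or.inl ⟨h0, ?_⟩
            subst h0
            rwa [hHG 0 (Nat.zero_le k)] at hp
          · refine Or.inr (Or.inl ⟨h0, ?_, ?_⟩)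
            · rw [hsgn.resolve_left (by omega)]; exact hs
            · rw [← hHG (k'-1) (by omega), ← hHG k' hk']; exact hp
          · refine Or.inr (Or.inr ⟨h0, ?_, ?_⟩)
            · rw [hsgn.resolve_left (by omega)]; exact hs
            · rw [← hHG (k'-1) (by omega), ← hHG k' hk']; exact hp
      · left
        intro i hli hik
        have := hagree i hli (by omega)
        rw [hHG i hik] at this
        exact this
end
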